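/- Fix an integer l ≥ 1. There exists a constant C > 0, depending only on l, such that for every integer k ≥ 2 and all real numbers b_i ∈ [−1,1] (1 ≤ i ≤ k) and b_{ij} ∈ [−1,1] (1 ≤ i < j ≤ k, with b_{ji} := b_{ij}), both of the following hold: |l!·S_{2,l} − b₁·M^l| ≤ C·k^{2l−1} and |l!·S_{3,l} − l·β·T₃·M^{l−1}| ≤ C·k^{2l−1}. -/

import Mathlib

open Finset

lemma card_pair_coords {n : ℕ} (s : Finset ℕ) (a b : Fin n) (hab : a ≠ b) :
    ((Fintype.piFinset fun _ : Fin n => s).filter fun f => f a = f b).card ≤ s.card ^ (n - 1) := by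
  have hb : b ∈ (univ : Finset (Fin n)) := mem_univ b
  have hcard : ((Fintype.piFinset fun i : Fin n => if i = b then ({0} : Finset ℕ) else s)).card
      = s.card ^ (n - 1) := by
    rw [Fintype.card_piFinset]
    rw [← Finset.mul_prod_erase (univ : Finset (Fin n)) _ hb]
    have h1 : (#(if b = b then ({0} : Finset ℕ) else s)) = 1 := by simp
    rw [h1, one_mul]
    rw [Finset.prod_congr rfl (fun i hi => by
      rw [if_neg (Finset.mem_erase.mp hi).1])]
    rw [Finset.prod_const, Finset.card_erase_of_mem hb, Finset.card_univ, Fintype.card_fin]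
  rw [← hcard]
  apply Finset.card_le_card_of_injOn (fun f => Function.update f b 0)
  · intro f hf
    rw [Finset.mem_coe, Finset.mem_filter] at hf
    rw [Finset.mem_coe, Fintype.mem_piFinset]
    intro i
    by_cases hib : i = b
    · subst hib; simp [Function.update_self]
    · simp only [Function.update_of_ne hib, if_neg hib]
      exact Fintype.mem_piFinset.mp hf.1 i
  · intro f hf g hg hfg
    simp only [Finset.coe_filter, Set.mem_setOf_eq] at hf hg
    funext i
    by_cases hib : i = b
    · subst hib
      have ha := congrFun hfg a
      simp only [Function.update_of_ne hab] at ha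
      rw [← hf.2, ← hg.2, ha]
    · have := congrFun hfg i
      simpa only [Function.update_of_ne hib] using this
lemma card_noninj (n : ℕ) (hn : 1 ≤ n) (s : Finset ℕ) :
    (((Fintype.piFinset fun _ : Fin n => s).filter fun f => ¬ Function.Injective f).card : ℝ)
      ≤ (n ^ 2 : ℝ) * (s.card : ℝ) ^ (n - 1) := by
  have hsub : ((Fintype.piFinset fun _ : Fin n => s).filter fun f => ¬ Function.Injective f)
      ⊆ ((univ : Finset (Fin n × Fin n)).filter fun p => p.1 ≠ p.2).biUnion
        (fun p => (Fintype.piFinset fun _ : Fin n => s).filter fun f => f p.1 = f p.2) := by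
    intro f hf
    rw [Finset.mem_filter] at hf
    rw [Function.not_injective_iff] at hf
    obtain ⟨a, b, hab, hne⟩ := hf.2
    refine Finset.mem_biUnion.mpr ⟨(a, b), ?_, ?_⟩
    · simp [hne]
    · exact Finset.mem_filter.mpr ⟨hf.1, hab⟩
  have h1 : (((Fintype.piFinset fun _ : Fin n => s).filter fun f => ¬ Function.Injective f).card : ℕ)
      ≤ n ^ 2 * s.card ^ (n - 1) := by
    calc _ ≤ _ := Finset.card_le_card hsub
    _ ≤ ∑ p ∈ ((univ : Finset (Fin n × Fin n)).filter fun p => p.1 ≠ p.2),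
          ((Fintype.piFinset fun _ : Fin n => s).filter fun f => f p.1 = f p.2).card :=
        Finset.card_biUnion_le
    _ ≤ ∑ p ∈ ((univ : Finset (Fin n × Fin n)).filter fun p => p.1 ≠ p.2), s.card ^ (n - 1) := by
        apply Finset.sum_le_sum
        intro p hp
        exact card_pair_coords s p.1 p.2 (Finset.mem_filter.mp hp).2
    _ = ((univ : Finset (Fin n × Fin n)).filter fun p => p.1 ≠ p.2).card * s.card ^ (n - 1) := by
        rw [Finset.sum_const, smul_eq_mul]
    _ ≤ n ^ 2 * s.card ^ (n - 1) := by
        apply Nat.mul_le_mul_right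
        calc _ ≤ (univ : Finset (Fin n × Fin n)).card := Finset.card_filter_le _ _
        _ = n ^ 2 := by simp [sq]
  calc (_ : ℝ) ≤ ((n ^ 2 * s.card ^ (n - 1) : ℕ) : ℝ) := by exact_mod_cast h1
  _ = _ := by push_cast; ring
lemma sum_inj_close (n : ℕ) (hn : 1 ≤ n) (s : Finset ℕ) (F : (Fin n → ℕ) → ℝ)
    (hF : ∀ f ∈ Fintype.piFinset (fun _ : Fin n => s), |F f| ≤ 1) :
    |(∑ f ∈ (Fintype.piFinset fun _ : Fin n => s).filter (fun f => Function.Injective f), F f)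
      - ∑ f ∈ Fintype.piFinset (fun _ : Fin n => s), F f| ≤ (n ^ 2 : ℝ) * (s.card : ℝ) ^ (n - 1) := by
  rw [← Finset.sum_filter_add_sum_filter_not (Fintype.piFinset fun _ : Fin n => s)
    (fun f => Function.Injective f) F]
  rw [sub_add_eq_sub_sub, sub_self, zero_sub, abs_neg]
  calc |∑ f ∈ (Fintype.piFinset fun _ : Fin n => s).filter (fun f => ¬ Function.Injective f), F f|
      ≤ ∑ f ∈ (Fintype.piFinset fun _ : Fin n => s).filter (fun f => ¬ Function.Injective f), |F f| :=
        Finset.abs_sum_le_sum_abs _ _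
    _ ≤ ∑ f ∈ (Fintype.piFinset fun _ : Fin n => s).filter (fun f => ¬ Function.Injective f), 1 := by
        apply Finset.sum_le_sum
        intro f hf
        exact hF f (Finset.mem_filter.mp hf).1
    _ = (((Fintype.piFinset fun _ : Fin n => s).filter fun f => ¬ Function.Injective f).card : ℝ) := by
        rw [Finset.sum_const, nsmul_eq_mul, mul_one]
    _ ≤ _ := card_noninj n hn s
lemma sum_pi_factor (l : ℕ) (s : Finset ℕ) (D : ℕ → ℕ → ℕ → ℝ) :
    ∑ f ∈ Fintype.piFinset (fun _ : Fin (2 * l) => s),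
      ∏ m ∈ Finset.range l, (if h : 2 * m + 1 < 2 * l then
        D m (f ⟨2 * m, by omega⟩) (f ⟨2 * m + 1, h⟩) else 1)
    = ∏ m ∈ Finset.range l, ∑ x ∈ s, ∑ y ∈ s, D m x y := by
  have key : ∏ m ∈ Finset.range l, ∑ x ∈ s, ∑ y ∈ s, D m x y
      = ∑ g ∈ Fintype.piFinset (fun _ : Fin l => s ×ˢ s),
          ∏ i : Fin l, D i.val (g i).1 (g i).2 := by
    rw [← Fin.prod_univ_eq_prod_range (fun m => ∑ x ∈ s, ∑ y ∈ s, D m x y) l]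
    rw [← Finset.prod_univ_sum (fun _ : Fin l => s ×ˢ s) (fun i p => D i.val p.1 p.2)]
    apply Finset.prod_congr rfl
    intro i _
    rw [Finset.sum_product]
  rw [key]
  apply Finset.sum_nbij' (i := fun f (m : Fin l) =>
      ((f ⟨2 * m.val, by have := m.isLt; omega⟩ : ℕ),
       (f ⟨2 * m.val + 1, by have := m.isLt; omega⟩ : ℕ)))
    (j := fun g (i : Fin (2 * l)) => if i.val % 2 = 0
      then (g ⟨i.val / 2, by have := i.isLt; omega⟩).1
      else (g ⟨i.val / 2, by have := i.isLt; omega⟩).2)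
  · intro f hf
    rw [Fintype.mem_piFinset]
    intro m
    rw [Finset.mem_product]
    exact ⟨Fintype.mem_piFinset.mp hf _, Fintype.mem_piFinset.mp hf _⟩
  · intro g hg
    rw [Fintype.mem_piFinset]
    intro i
    split
    · exact (Finset.mem_product.mp (Fintype.mem_piFinset.mp hg _)).1
    · exact (Finset.mem_product.mp (Fintype.mem_piFinset.mp hg _)).2
  · intro f _
    funext x
    dsimp only
    by_cases h : x.val % 2 = 0
    · rw [if_pos h]
      congr 1
      apply Fin.ext
      simp only [Fin.val_mk]
      omega
    · rw [if_neg h]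
      congr 1
      apply Fin.ext
      simp only [Fin.val_mk]
      omega
  · intro g _
    funext m
    dsimp only
    refine Prod.ext ?_ ?_
    · have h0 : (2 * m.val) % 2 = 0 := by omega
      simp only [h0, if_true]
      congr 2
      apply Fin.ext
      simp only [Fin.val_mk]
      omega
    · have h1 : ¬ ((2 * m.val + 1) % 2 = 0) := by omega
      simp only [h1, if_false]
      congr 2
      apply Fin.ext
      simp only [Fin.val_mk]
      omega
  · intro f _
    rw [← Fin.prod_univ_eq_prod_range (fun m => if h : 2 * m + 1 < 2 * l then
        D m (f ⟨2 * m, by omega⟩) (f ⟨2 * m + 1, h⟩) else 1) l]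
    apply Finset.prod_congr rfl
    intro i _
    rw [dif_pos (by have := i.isLt; omega : 2 * i.val + 1 < 2 * l)]
/-- Fix `l ≥ 1`. There is `C > 0` (depending only on `l`) such that for every
`k ≥ 2` and all biases `b_i ∈ [−1,1]` (`1 ≤ i ≤ k`) and symmetric pairwise
biases `c i j ∈ [−1,1]` (`i ≠ j` in `{1,…,k}`), both
`|l!·S₂ − b₁·M^l| ≤ C·k^{2l−1}` and `|l!·S₃ − l·β·T₃·M^{l−1}| ≤ C·k^{2l−1}`
hold, where `β = Σ_{i=2}^k b_i`, `M = Σ_{2≤i<j≤k} c_{ij}`, `T₃ = Σ_{i=2}^k c_{1i}`,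
`S₂` is `b₁` times the sum over all sets of `l` pairwise-disjoint unordered
pairs from `{2,…,k}` (each counted once) of the products of `c` over the pairs,
and `S₃` sums `b_{j₀}·c_{1 j₁}·(product over `l−1` disjoint pairs)` over all
choices of distinct `j₀, j₁ ∈ {2,…,k}` and `l−1` pairwise-disjoint unordered
pairs from `{2,…,k}∖{j₀,j₁}` (each configuration counted once); both `S₂` and
`S₃` are realized as sums over injective tuples divided by the symmetry
factors `l!·2^l` and `(l−1)!·2^{l−1}` respectively. -/
theorem stmt_18 (l : ℕ) (hl : 1 ≤ l) :
    ∃ C : ℝ, 0 < C ∧ ∀ k : ℕ, 2 ≤ k → ∀ b : ℕ → ℝ, ∀ c : ℕ → ℕ → ℝ,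
      (∀ i ∈ Finset.Icc 1 k, b i ∈ Set.Icc (-1 : ℝ) 1) →
      (∀ i j, c i j = c j i) →
      (∀ i ∈ Finset.Icc 1 k, ∀ j ∈ Finset.Icc 1 k, i ≠ j → c i j ∈ Set.Icc (-1 : ℝ) 1) →
      ∀ β M T₃ S₂ S₃ : ℝ,
        β = ∑ i ∈ Finset.Icc 2 k, b i →
        M = ∑ i ∈ Finset.Icc 2 k, ∑ j ∈ Finset.Icc (i + 1) k, c i j →
        T₃ = ∑ i ∈ Finset.Icc 2 k, c 1 i →
        S₂ = b 1 * (((l.factorial : ℝ) * 2 ^ l)⁻¹ *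
          ∑ f ∈ (Fintype.piFinset fun _ : Fin (2 * l) => Finset.Icc 2 k).filter
              (fun f => Function.Injective f),
            ∏ m ∈ (Finset.range l).attach,
              c (f ⟨2 * (m : ℕ), by have := Finset.mem_range.mp m.2; omega⟩)
                (f ⟨2 * (m : ℕ) + 1, by have := Finset.mem_range.mp m.2; omega⟩)) →
        S₃ = (((l - 1).factorial : ℝ) * 2 ^ (l - 1))⁻¹ *
          ∑ f ∈ (Fintype.piFinset fun _ : Fin (2 * l) => Finset.Icc 2 k).filter
              (fun f => Function.Injective f),
            b (f ⟨0, by omega⟩) * c 1 (f ⟨1, by omega⟩) *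
              ∏ m ∈ (Finset.Icc 1 (l - 1)).attach,
                c (f ⟨2 * (m : ℕ), by have := Finset.mem_Icc.mp m.2; omega⟩)
                  (f ⟨2 * (m : ℕ) + 1, by have := Finset.mem_Icc.mp m.2; omega⟩) →
        |(l.factorial : ℝ) * S₂ - b 1 * M ^ l| ≤ C * k ^ (2 * l - 1) ∧
        |(l.factorial : ℝ) * S₃ - l * β * T₃ * M ^ (l - 1)| ≤ C * k ^ (2 * l - 1) := by
  refine ⟨((2 * l + 1 : ℕ) : ℝ) ^ 3, by positivity, ?_⟩
  intro k hk b c hb hcsym hc β M T₃ S₂ S₃ hβ hM hT₃ hS₂ hS₃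
  set s : Finset ℕ := Finset.Icc 2 k with hs
  set c' : ℕ → ℕ → ℝ := fun i j => if i = j then 0 else c i j with hc'
  -- basic bounds
  have hbmem : ∀ x ∈ s, |b x| ≤ 1 := by
    intro x hx
    have hx' : x ∈ Finset.Icc 1 k := by
      rw [Finset.mem_Icc] at hx ⊢; omega
    have := hb x hx'
    rw [Set.mem_Icc] at this
    exact abs_le.mpr this
  have hc'mem : ∀ x ∈ s, ∀ y ∈ s, |c' x y| ≤ 1 := by
    intro x hx y hy
    by_cases hxy : x = y
    · simp [hc', hxy]
    · rw [hc']
      simp only [if_neg hxy]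
      have hx' : x ∈ Finset.Icc 1 k := by rw [Finset.mem_Icc] at hx ⊢; omega
      have hy' : y ∈ Finset.Icc 1 k := by rw [Finset.mem_Icc] at hy ⊢; omega
      have := hc x hx' y hy' hxy
      rw [Set.mem_Icc] at this
      exact abs_le.mpr this
  have hc1mem : ∀ y ∈ s, |c 1 y| ≤ 1 := by
    intro y hy
    have hy' : y ∈ Finset.Icc 1 k := by rw [Finset.mem_Icc] at hy ⊢; omega
    have h1 : (1 : ℕ) ∈ Finset.Icc 1 k := by rw [Finset.mem_Icc]; omega
    have hne : (1 : ℕ) ≠ y := by rw [Finset.mem_Icc] at hy; omega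
    have := hc 1 h1 y hy' hne
    rw [Set.mem_Icc] at this
    exact abs_le.mpr this
  have hscard : (s.card : ℝ) ≤ (k : ℝ) := by
    rw [hs, Nat.card_Icc]
    exact_mod_cast Nat.le_of_lt_succ (Nat.lt_succ_of_le (by omega))
  -- the key diagonal-free double sum
  have hM2 : ∑ x ∈ s, ∑ y ∈ s, c' x y = 2 * M := by
    have hsplit : ∀ x ∈ s, ∀ y ∈ s, c' x y =
        (if x < y then c x y else 0) + (if y < x then c x y else 0) := by
      intro x _ y _
      rcases lt_trichotomy x y with h | h | h
      · rw [hc']; simp only [if_pos h, if_neg (by omega : ¬ y < x), if_neg (by omega : ¬ x = y)]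
        ring
      · rw [hc']; simp [h]
      · rw [hc']; simp only [if_pos h, if_neg (by omega : ¬ x < y), if_neg (by omega : ¬ x = y)]
        ring
    have h1 : ∀ x ∈ s, ∑ y ∈ s, (if x < y then c x y else 0) = ∑ y ∈ Finset.Icc (x+1) k, c x y := by
      intro x hx
      rw [← Finset.sum_filter]
      apply Finset.sum_congr _ (fun _ _ => rfl)
      ext y
      rw [hs] at hx ⊢
      rw [Finset.mem_Icc] at hx
      simp only [Finset.mem_filter, Finset.mem_Icc]
      omega
    calc ∑ x ∈ s, ∑ y ∈ s, c' x y
        = ∑ x ∈ s, ∑ y ∈ s, ((if x < y then c x y else 0) + (if y < x then c x y else 0)) := by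
          apply Finset.sum_congr rfl
          intro x hx
          exact Finset.sum_congr rfl (fun y hy => hsplit x hx y hy)
      _ = (∑ x ∈ s, ∑ y ∈ s, (if x < y then c x y else 0))
          + ∑ x ∈ s, ∑ y ∈ s, (if y < x then c x y else 0) := by
          rw [← Finset.sum_add_distrib]
          exact Finset.sum_congr rfl (fun x _ => Finset.sum_add_distrib)
      _ = M + M := by
          congr 1
          · rw [hM]
            exact Finset.sum_congr rfl h1
          · rw [Finset.sum_comm]
            rw [hM]
            apply Finset.sum_congr rfl
            intro y hy
            have := h1 y hy
            calc ∑ x ∈ s, (if y < x then c x y else 0)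
                = ∑ x ∈ s, (if y < x then c y x else 0) := by
                  apply Finset.sum_congr rfl
                  intro x _
                  rw [hcsym x y]
              _ = ∑ x ∈ Finset.Icc (y+1) k, c y x := by
                  rw [← Finset.sum_filter]
                  apply Finset.sum_congr _ (fun _ _ => rfl)
                  ext x
                  rw [hs] at hy ⊢
                  rw [Finset.mem_Icc] at hy
                  simp only [Finset.mem_filter, Finset.mem_Icc]
                  omega
      _ = 2 * M := by ring
  have hfl : (l.factorial : ℝ) ≠ 0 := Nat.cast_ne_zero.mpr (Nat.factorial_ne_zero l)
  have hb1 : |b 1| ≤ 1 := by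
    have h1 : (1 : ℕ) ∈ Finset.Icc 1 k := by rw [Finset.mem_Icc]; omega
    have := hb 1 h1
    rw [Set.mem_Icc] at this
    exact abs_le.mpr this
  have hinv2 : ∀ n : ℕ, |((2:ℝ)^n)⁻¹| ≤ 1 := by
    intro n
    rw [abs_of_nonneg (by positivity)]
    rw [inv_le_one_iff₀]
    right
    exact one_le_pow₀ (by norm_num)
  have hnum : ∀ A : ℝ, (0:ℝ) ≤ A → A ≤ (l:ℝ) * (((2*l:ℕ) : ℝ)^2) →
      A * (s.card : ℝ) ^ (2*l-1) ≤ ((2 * l + 1 : ℕ) : ℝ) ^ 3 * (k:ℝ) ^ (2*l-1) := by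
    intro A hA0 hA
    apply mul_le_mul
    · refine le_trans hA ?_
      have hl' : (1:ℝ) ≤ (l:ℝ) := by exact_mod_cast hl
      push_cast
      nlinarith
    · apply pow_le_pow_left₀ (by positivity) hscard
    · positivity
    · positivity
  constructor
  -- ================= Part 1 : S₂ =================
  · set P : (Fin (2*l) → ℕ) → ℝ := fun f => ∏ m ∈ Finset.range l,
      (if h : 2*m+1 < 2*l then c' (f ⟨2*m, by omega⟩) (f ⟨2*m+1, h⟩) else 1) with hP
    have hPabs : ∀ f ∈ Fintype.piFinset (fun _ : Fin (2*l) => s), |P f| ≤ 1 := by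
      intro f hf
      rw [hP]
      dsimp only
      rw [Finset.abs_prod]
      apply Finset.prod_le_one (fun m _ => abs_nonneg _)
      intro m hm
      by_cases h : 2*m+1 < 2*l
      · rw [dif_pos h]
        exact hc'mem _ (Fintype.mem_piFinset.mp hf _) _ (Fintype.mem_piFinset.mp hf _)
      · rw [dif_neg h]; simp
    have hA : ∀ f ∈ (Fintype.piFinset fun _ : Fin (2 * l) => s).filter
        (fun f => Function.Injective f),
        (∏ m ∈ (Finset.range l).attach,
          c (f ⟨2 * (m : ℕ), by have := Finset.mem_range.mp m.2; omega⟩)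
            (f ⟨2 * (m : ℕ) + 1, by have := Finset.mem_range.mp m.2; omega⟩)) = P f := by
      intro f hf
      have hinj := (Finset.mem_filter.mp hf).2
      rw [hP]
      dsimp only
      rw [← Finset.prod_attach (Finset.range l) (fun m => if h : 2*m+1 < 2*l then
          c' (f ⟨2*m, by omega⟩) (f ⟨2*m+1, h⟩) else 1)]
      apply Finset.prod_congr rfl
      intro m _
      have hm : 2*(m : ℕ)+1 < 2*l := by have := Finset.mem_range.mp m.2; omega
      rw [dif_pos hm, hc']
      dsimp only
      have hne : f ⟨2*(m:ℕ), by omega⟩ ≠ f ⟨2*(m:ℕ)+1, hm⟩ := by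
        intro heq
        have h2 := hinj heq
        have h3 : (2*(m:ℕ) : ℕ) = 2*(m:ℕ)+1 := congrArg Fin.val h2
        omega
      rw [if_neg hne]
    have hS₂' : S₂ = b 1 * (((l.factorial : ℝ) * 2 ^ l)⁻¹ *
        ∑ f ∈ (Fintype.piFinset fun _ : Fin (2 * l) => s).filter
          (fun f => Function.Injective f), P f) := by
      rw [hS₂]
      exact congrArg _ (congrArg _ (Finset.sum_congr rfl hA))
    have hB : ∑ f ∈ Fintype.piFinset (fun _ : Fin (2*l) => s), P f = (2*M)^l := by
      calc ∑ f ∈ Fintype.piFinset (fun _ : Fin (2*l) => s), P f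
          = ∏ m ∈ Finset.range l, ∑ x ∈ s, ∑ y ∈ s, c' x y :=
            sum_pi_factor l s (fun _ x y => c' x y)
        _ = ∏ _m ∈ Finset.range l, (2*M) := Finset.prod_congr rfl (fun _ _ => hM2)
        _ = (2*M)^l := by rw [Finset.prod_const, Finset.card_range]
    have herr := sum_inj_close (2*l) (by omega) s P hPabs
    rw [hB] at herr
    have heq : (l.factorial : ℝ) * S₂ - b 1 * M ^ l
        = b 1 * ((2:ℝ)^l)⁻¹ * ((∑ f ∈ (Fintype.piFinset fun _ : Fin (2*l) => s).filter
            (fun f => Function.Injective f), P f) - (2*M)^l) := by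
      rw [hS₂']
      field_simp
      ring
    rw [heq]
    calc |b 1 * ((2:ℝ)^l)⁻¹ * ((∑ f ∈ (Fintype.piFinset fun _ : Fin (2*l) => s).filter
            (fun f => Function.Injective f), P f) - (2*M)^l)|
        = |b 1 * ((2:ℝ)^l)⁻¹| * |(∑ f ∈ (Fintype.piFinset fun _ : Fin (2*l) => s).filter
            (fun f => Function.Injective f), P f) - (2*M)^l| := abs_mul _ _
      _ ≤ 1 * ((((2*l:ℕ):ℝ)) ^ 2 * (s.card : ℝ) ^ (2*l-1)) := by
          apply mul_le_mul _ herr (abs_nonneg _) zero_le_one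
          rw [abs_mul]
          exact mul_le_one₀ hb1 (abs_nonneg _) (hinv2 l)
      _ ≤ ((2 * l + 1 : ℕ) : ℝ) ^ 3 * (k:ℝ) ^ (2*l-1) := by
          rw [one_mul]
          apply hnum
          · positivity
          · have hl' : (1:ℝ) ≤ (l:ℝ) := by exact_mod_cast hl
            nlinarith
  -- ================= Part 2 : S₃ =================
  · set D : ℕ → ℕ → ℕ → ℝ := fun m x y => if m = 0 then b x * c 1 y else c' x y with hD
    set P : (Fin (2*l) → ℕ) → ℝ := fun f => ∏ m ∈ Finset.range l,
      (if h : 2*m+1 < 2*l then D m (f ⟨2*m, by omega⟩) (f ⟨2*m+1, h⟩) else 1) with hP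
    have hDabs : ∀ m : ℕ, ∀ x ∈ s, ∀ y ∈ s, |D m x y| ≤ 1 := by
      intro m x hx y hy
      rw [hD]
      dsimp only
      by_cases hm : m = 0
      · rw [if_pos hm, abs_mul]
        exact mul_le_one₀ (hbmem x hx) (abs_nonneg _) (hc1mem y hy)
      · rw [if_neg hm]
        exact hc'mem x hx y hy
    have hPabs : ∀ f ∈ Fintype.piFinset (fun _ : Fin (2*l) => s), |P f| ≤ 1 := by
      intro f hf
      rw [hP]
      dsimp only
      rw [Finset.abs_prod]
      apply Finset.prod_le_one (fun m _ => abs_nonneg _)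
      intro m hm
      by_cases h : 2*m+1 < 2*l
      · rw [dif_pos h]
        exact hDabs m _ (Fintype.mem_piFinset.mp hf _) _ (Fintype.mem_piFinset.mp hf _)
      · rw [dif_neg h]; simp
    have herase : (Finset.range l).erase 0 = Finset.Icc 1 (l-1) := by
      ext m
      simp only [Finset.mem_erase, Finset.mem_range, Finset.mem_Icc]
      omega
    have h0mem : (0 : ℕ) ∈ Finset.range l := Finset.mem_range.mpr (by omega)
    have hA : ∀ f ∈ (Fintype.piFinset fun _ : Fin (2 * l) => s).filter
        (fun f => Function.Injective f),
        (b (f ⟨0, by omega⟩) * c 1 (f ⟨1, by omega⟩) *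
          ∏ m ∈ (Finset.Icc 1 (l - 1)).attach,
            c (f ⟨2 * (m : ℕ), by have := Finset.mem_Icc.mp m.2; omega⟩)
              (f ⟨2 * (m : ℕ) + 1, by have := Finset.mem_Icc.mp m.2; omega⟩)) = P f := by
      intro f hf
      have hinj := (Finset.mem_filter.mp hf).2
      rw [hP]
      dsimp only
      rw [← Finset.mul_prod_erase (Finset.range l)
        (fun m => if h : 2*m+1 < 2*l then D m (f ⟨2*m, by omega⟩) (f ⟨2*m+1, h⟩) else 1) h0mem]
      rw [herase]
      have hQ0 : (if h : 2*0+1 < 2*l then D 0 (f ⟨2*0, by omega⟩) (f ⟨2*0+1, h⟩) else 1)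
          = b (f ⟨0, by omega⟩) * c 1 (f ⟨1, by omega⟩) := by
        rw [dif_pos (by omega : 2*0+1 < 2*l), hD]
        norm_num
      rw [hQ0]
      congr 1
      rw [← Finset.prod_attach (Finset.Icc 1 (l-1)) (fun m => if h : 2*m+1 < 2*l then
          D m (f ⟨2*m, by omega⟩) (f ⟨2*m+1, h⟩) else 1)]
      apply Finset.prod_congr rfl
      intro m _
      have hmIcc := Finset.mem_Icc.mp m.2
      have hm : 2*(m : ℕ)+1 < 2*l := by omega
      rw [dif_pos hm, hD]
      dsimp only
      rw [if_neg (by omega : ¬ (m : ℕ) = 0), hc']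
      dsimp only
      have hne : f ⟨2*(m:ℕ), by omega⟩ ≠ f ⟨2*(m:ℕ)+1, hm⟩ := by
        intro heq
        have h2 := hinj heq
        have h3 : (2*(m:ℕ) : ℕ) = 2*(m:ℕ)+1 := congrArg Fin.val h2
        omega
      rw [if_neg hne]
    have hS₃' : S₃ = (((l-1).factorial : ℝ) * 2 ^ (l-1))⁻¹ *
        ∑ f ∈ (Fintype.piFinset fun _ : Fin (2 * l) => s).filter
          (fun f => Function.Injective f), P f := by
      rw [hS₃]
      exact congrArg _ (Finset.sum_congr rfl hA)
    have hB : ∑ f ∈ Fintype.piFinset (fun _ : Fin (2*l) => s), P f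
        = β * T₃ * (2*M)^(l-1) := by
      calc ∑ f ∈ Fintype.piFinset (fun _ : Fin (2*l) => s), P f
          = ∏ m ∈ Finset.range l, ∑ x ∈ s, ∑ y ∈ s, D m x y := sum_pi_factor l s D
        _ = (∑ x ∈ s, ∑ y ∈ s, D 0 x y) * ∏ m ∈ Finset.Icc 1 (l-1), ∑ x ∈ s, ∑ y ∈ s, D m x y := by
            rw [← Finset.mul_prod_erase (Finset.range l) _ h0mem, herase]
        _ = β * T₃ * (2*M)^(l-1) := by
            congr 1
            · rw [hβ, hT₃, Finset.sum_mul]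
              apply Finset.sum_congr rfl
              intro x _
              rw [Finset.mul_sum]
              apply Finset.sum_congr rfl
              intro y _
              exact if_pos rfl
            · calc ∏ m ∈ Finset.Icc 1 (l-1), ∑ x ∈ s, ∑ y ∈ s, D m x y
                  = ∏ m ∈ Finset.Icc 1 (l-1), (2*M) := by
                    apply Finset.prod_congr rfl
                    intro m hm
                    have := Finset.mem_Icc.mp hm
                    rw [← hM2]
                    apply Finset.sum_congr rfl
                    intro x _
                    apply Finset.sum_congr rfl
                    intro y _
                    rw [hD]
                    dsimp only
                    rw [if_neg (by omega : ¬ m = 0)]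
                _ = (2*M)^(l-1) := by
                    rw [Finset.prod_const, Nat.card_Icc]
                    norm_num
    have herr := sum_inj_close (2*l) (by omega) s P hPabs
    rw [hB] at herr
    have hl1f : ((l-1).factorial : ℝ) ≠ 0 := Nat.cast_ne_zero.mpr (Nat.factorial_ne_zero _)
    have hlf : (l.factorial : ℝ) = (l : ℝ) * ((l-1).factorial : ℝ) := by
      exact_mod_cast congrArg (Nat.cast (R := ℝ)) (Nat.mul_factorial_pred (by omega)).symm
    have heq : (l.factorial : ℝ) * S₃ - l * β * T₃ * M ^ (l-1)
        = (l : ℝ) * ((2:ℝ)^(l-1))⁻¹ * ((∑ f ∈ (Fintype.piFinset fun _ : Fin (2*l) => s).filter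
            (fun f => Function.Injective f), P f) - β * T₃ * (2*M)^(l-1)) := by
      rw [hS₃', hlf]
      field_simp
      ring
    rw [heq]
    calc |(l : ℝ) * ((2:ℝ)^(l-1))⁻¹ * ((∑ f ∈ (Fintype.piFinset fun _ : Fin (2*l) => s).filter
            (fun f => Function.Injective f), P f) - β * T₃ * (2*M)^(l-1))|
        = |(l : ℝ) * ((2:ℝ)^(l-1))⁻¹| * |(∑ f ∈ (Fintype.piFinset fun _ : Fin (2*l) => s).filter
            (fun f => Function.Injective f), P f) - β * T₃ * (2*M)^(l-1)| := abs_mul _ _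
      _ ≤ (l : ℝ) * ((((2*l:ℕ):ℝ)) ^ 2 * (s.card : ℝ) ^ (2*l-1)) := by
          apply mul_le_mul _ herr (abs_nonneg _) (by positivity)
          rw [abs_mul]
          calc |(l:ℝ)| * |((2:ℝ)^(l-1))⁻¹| ≤ |(l:ℝ)| * 1 :=
                mul_le_mul_of_nonneg_left (hinv2 (l-1)) (abs_nonneg _)
            _ = (l : ℝ) := by rw [mul_one, abs_of_nonneg (by positivity)]
      _ ≤ ((2 * l + 1 : ℕ) : ℝ) ^ 3 * (k:ℝ) ^ (2*l-1) := by
          rw [← mul_assoc]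
          apply hnum
          · positivity
          · rfl
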